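/- Let F(p,A) = ⟨p, cof(−A) p⟩ when A is negative semidefinite on the orthogonal complement of p, and F(p,A) = 0 otherwise. Then F is degenerate elliptic: for all p ∈ ℝ^d and symmetric A ≤ B (i.e., B − A positive semidefinite), F(p,A) ≥ F(p,B). -/

import Mathlib

open Matrix

/-- The cofactor matrix of a square matrix: the transpose of the adjugate, i.e.
the unique continuous map with `cof M = det M • M⁻¹` for invertible `M`. -/
noncomputable def cof {d : ℕ} (M : Matrix (Fin d) (Fin d) ℝ) : Matrix (Fin d) (Fin d) ℝ :=
  (Matrix.adjugate M)ᵀ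

open Classical in
/-- The operator `F(p,A) = ⟨p, cof(−A) p⟩` when `A` is negative semidefinite on the
orthogonal complement of `p`, and `F(p,A) = 0` otherwise. -/
noncomputable def Fop {d : ℕ} (p : Fin d → ℝ) (A : Matrix (Fin d) (Fin d) ℝ) : ℝ :=
  if ∀ q : Fin d → ℝ, q ⬝ᵥ p = 0 → q ⬝ᵥ (A *ᵥ q) ≤ 0 then p ⬝ᵥ (cof (-A) *ᵥ p) else 0

/- ### Auxiliary lemmas -/

lemma Fop_aux_psd_det_nonneg {n : ℕ} {P : Matrix (Fin n) (Fin n) ℝ} (hP : P.PosSemidef) :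
    0 ≤ P.det := by
  rw [hP.isHermitian.det_eq_prod_eigenvalues]
  exact Finset.prod_nonneg fun i _ => by exact_mod_cast hP.eigenvalues_nonneg i

lemma Fop_aux_det_one_add_psd {n : ℕ} {P : Matrix (Fin n) (Fin n) ℝ} (hP : P.PosSemidef) :
    1 ≤ (1 + P).det := by
  have hH := hP.isHermitian
  have hU : (hH.eigenvectorUnitary : Matrix (Fin n) (Fin n) ℝ) *
      star (hH.eigenvectorUnitary : Matrix (Fin n) (Fin n) ℝ) = 1 :=
    mem_unitaryGroup_iff.mp hH.eigenvectorUnitary.2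
  have hd : 1 + P = (hH.eigenvectorUnitary : Matrix (Fin n) (Fin n) ℝ) *
      (1 + diagonal (RCLike.ofReal ∘ hH.eigenvalues)) *
      star (hH.eigenvectorUnitary : Matrix (Fin n) (Fin n) ℝ) := by
    rw [Matrix.mul_add, Matrix.mul_one, Matrix.add_mul, hU, ← Unitary.conjStarAlgAut_apply (S := ℝ), ← hH.spectral_theorem]
  rw [hd, det_mul_right_comm, hU, one_mul]
  have h2 : (1 : Matrix (Fin n) (Fin n) ℝ) + diagonal (RCLike.ofReal ∘ hH.eigenvalues)
      = diagonal (fun i => 1 + hH.eigenvalues i) := by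
    rw [← diagonal_one, diagonal_add]
    congr 1
  rw [h2, det_diagonal]
  calc (1:ℝ) = ∏ _i : Fin n, 1 := by simp
    _ ≤ ∏ i, (1 + hH.eigenvalues i) :=
        Finset.prod_le_prod (fun i _ => zero_le_one)
          (fun i _ => by linarith [hP.eigenvalues_nonneg i])

section
open scoped MatrixOrder

noncomputable def Matrix.PosSemidef.sqrt {n : ℕ} {S : Matrix (Fin n) (Fin n) ℝ}
    (_hS : S.PosSemidef) : Matrix (Fin n) (Fin n) ℝ := CFC.sqrt S

lemma Matrix.PosSemidef.posSemidef_sqrt {n : ℕ} {S : Matrix (Fin n) (Fin n) ℝ}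
    (hS : S.PosSemidef) : hS.sqrt.PosSemidef := (CFC.sqrt_nonneg S).posSemidef

lemma Matrix.PosSemidef.sqrt_mul_self {n : ℕ} {S : Matrix (Fin n) (Fin n) ℝ}
    (hS : S.PosSemidef) : hS.sqrt * hS.sqrt = S := CFC.sqrt_mul_sqrt_self S hS.nonneg

end

lemma Fop_aux_det_mono_psd {n : ℕ} {S T : Matrix (Fin n) (Fin n) ℝ}
    (hS : S.PosSemidef) (hT : T.PosSemidef) : S.det ≤ (S + T).det := by
  by_cases h : S.det = 0
  · rw [h]; exact Fop_aux_psd_det_nonneg (hS.add hT)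
  · have hR : (hS.sqrt).PosSemidef := hS.posSemidef_sqrt
    have hRR : hS.sqrt * hS.sqrt = S := hS.sqrt_mul_self
    have hdR : hS.sqrt.det * hS.sqrt.det = S.det := by rw [← det_mul, hRR]
    have hdRne : hS.sqrt.det ≠ 0 := fun h0 => h (by rw [← hdR, h0, zero_mul])
    have hu : IsUnit hS.sqrt.det := isUnit_iff_ne_zero.mpr hdRne
    have hRinv : hS.sqrt * hS.sqrt⁻¹ = 1 := mul_nonsing_inv _ hu
    have hRinv' : hS.sqrt⁻¹ * hS.sqrt = 1 := nonsing_inv_mul _ hu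
    have hP : (hS.sqrt⁻¹ * T * hS.sqrt⁻¹).PosSemidef := by
      have hh : (hS.sqrt⁻¹)ᴴ = hS.sqrt⁻¹ := hR.isHermitian.inv.eq
      have := hT.mul_mul_conjTranspose_same (hS.sqrt⁻¹)
      rwa [hh] at this
    have hmid : hS.sqrt * (hS.sqrt⁻¹ * T * hS.sqrt⁻¹) * hS.sqrt = T := by
      calc hS.sqrt * (hS.sqrt⁻¹ * T * hS.sqrt⁻¹) * hS.sqrt
          = (hS.sqrt * hS.sqrt⁻¹) * T * (hS.sqrt⁻¹ * hS.sqrt) := by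
            simp only [Matrix.mul_assoc]
        _ = T := by rw [hRinv, hRinv', Matrix.mul_one, Matrix.one_mul]
    have key : S + T = hS.sqrt * (1 + hS.sqrt⁻¹ * T * hS.sqrt⁻¹) * hS.sqrt := by
      rw [Matrix.mul_add, Matrix.mul_one, Matrix.add_mul, hRR, hmid]
    have hSpos : 0 < S.det := lt_of_le_of_ne (Fop_aux_psd_det_nonneg hS) (Ne.symm h)
    rw [key, det_mul, det_mul]
    have h1 : 1 ≤ (1 + hS.sqrt⁻¹ * T * hS.sqrt⁻¹).det := Fop_aux_det_one_add_psd hP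
    nlinarith [hdR, hSpos]

lemma Fop_aux_dot_conj {n m : ℕ} (C : Matrix (Fin m) (Fin n) ℝ) (M : Matrix (Fin n) (Fin n) ℝ)
    (y : Fin m → ℝ) :
    y ⬝ᵥ ((C * M * Cᵀ) *ᵥ y) = (Cᵀ *ᵥ y) ⬝ᵥ (M *ᵥ (Cᵀ *ᵥ y)) := by
  conv_rhs => rw [mulVec_transpose C y, dotProduct_mulVec, vecMul_vecMul,
    ← mulVec_transpose C y, dotProduct_mulVec, vecMul_vecMul]
  rw [dotProduct_mulVec]

lemma Fop_aux_adjugate_diag {n : ℕ} (X : Matrix (Fin (n+1)) (Fin (n+1)) ℝ) (ℓ : Fin (n+1)) :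
    adjugate X ℓ ℓ = (X.submatrix ℓ.succAbove ℓ.succAbove).det := by
  rw [adjugate_apply, det_succ_row _ ℓ]
  rw [Finset.sum_eq_single ℓ]
  · have e1 : (X.updateRow ℓ (Pi.single ℓ 1)) ℓ ℓ = 1 := by simp
    have e2 : (X.updateRow ℓ (Pi.single ℓ 1)).submatrix ℓ.succAbove ℓ.succAbove
        = X.submatrix ℓ.succAbove ℓ.succAbove := by
      ext r c; simp [Matrix.updateRow_ne (Fin.succAbove_ne ℓ r)]
    have e3 : ((-1 : ℝ)) ^ ((ℓ : ℕ) + (ℓ : ℕ)) = 1 := Even.neg_one_pow ⟨ℓ, rfl⟩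
    rw [e1, e2, mul_one, e3, one_mul]
  · intro j _ hj
    have : (X.updateRow ℓ (Pi.single ℓ 1)) ℓ j = 0 := by
      simp [Pi.single_apply, (hj : j ≠ ℓ).symm]
    rw [this]; ring
  · intro h; exact absurd (Finset.mem_univ ℓ) h

lemma Fop_aux_single_dot_matrix {n : ℕ} (X : Matrix (Fin n) (Fin n) ℝ) (ℓ : Fin n) :
    Pi.single ℓ 1 ⬝ᵥ (X *ᵥ Pi.single ℓ 1) = X ℓ ℓ := by
  simp [mulVec_single]

lemma Fop_aux_detQ {n : ℕ} (ℓ : Fin (n+1)) (p : Fin (n+1) → ℝ) :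
    ((1 : Matrix (Fin (n+1)) (Fin (n+1)) ℝ).updateCol ℓ p).det = p ℓ := by
  rw [← cramer_apply, cramer_one]; rfl

lemma Fop_aux_mulVecQ {n : ℕ} (ℓ : Fin (n+1)) (p : Fin (n+1) → ℝ) :
    (1 : Matrix (Fin (n+1)) (Fin (n+1)) ℝ).updateCol ℓ p *ᵥ Pi.single ℓ 1 = p := by
  ext i
  simp [mulVec_single, updateCol_self]

lemma Fop_aux_rep {n : ℕ} (ℓ : Fin (n+1)) (p : Fin (n+1) → ℝ) (hp : p ℓ ≠ 0)
    (M : Matrix (Fin (n+1)) (Fin (n+1)) ℝ) :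
    p ⬝ᵥ (adjugate M *ᵥ p) = (p ℓ)^2 *
      ((((1 : Matrix (Fin (n+1)) (Fin (n+1)) ℝ).updateCol ℓ p)⁻¹ * M *
        (((1 : Matrix (Fin (n+1)) (Fin (n+1)) ℝ).updateCol ℓ p)⁻¹)ᵀ).submatrix
        ℓ.succAbove ℓ.succAbove).det := by
  set Q := (1 : Matrix (Fin (n+1)) (Fin (n+1)) ℝ).updateCol ℓ p with hQ
  have hdet : Q.det = p ℓ := Fop_aux_detQ ℓ p
  have hu : IsUnit Q.det := by rw [hdet]; exact isUnit_iff_ne_zero.mpr hp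
  have hQQ : Q * Q⁻¹ = 1 := mul_nonsing_inv _ hu
  have hQ'Q : Q⁻¹ * Q = 1 := nonsing_inv_mul _ hu
  set Mt := Q⁻¹ * M * (Q⁻¹)ᵀ with hMt
  have hback : Q * Mt * Qᵀ = M := by
    have h1 : (Q⁻¹)ᵀ * Qᵀ = 1 := by rw [← transpose_mul, hQQ, transpose_one]
    calc Q * (Q⁻¹ * M * (Q⁻¹)ᵀ) * Qᵀ = (Q * Q⁻¹) * M * ((Q⁻¹)ᵀ * Qᵀ) := by
          simp only [Matrix.mul_assoc]
      _ = M := by rw [hQQ, h1, Matrix.mul_one, Matrix.one_mul]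
  have hadj : adjugate M = adjugate Qᵀ * adjugate Mt * adjugate Q := by
    rw [← hback, adjugate_mul_distrib, adjugate_mul_distrib, Matrix.mul_assoc]
  have hmid : Qᵀ * adjugate M * Q = (p ℓ)^2 • adjugate Mt := by
    rw [hadj]
    calc Qᵀ * (adjugate Qᵀ * adjugate Mt * adjugate Q) * Q
        = (Qᵀ * adjugate Qᵀ) * adjugate Mt * (adjugate Q * Q) := by
          simp only [Matrix.mul_assoc]
      _ = (Qᵀ.det • 1) * adjugate Mt * (Q.det • 1) := by
          rw [mul_adjugate, adjugate_mul]
      _ = (p ℓ)^2 • adjugate Mt := by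
          rw [det_transpose, hdet]
          rw [Matrix.smul_mul, Matrix.mul_smul, Matrix.smul_mul, Matrix.one_mul,
            Matrix.mul_one, smul_smul]
          rw [pow_two]
  have hpe : Q *ᵥ Pi.single ℓ 1 = p := Fop_aux_mulVecQ ℓ p
  have h1 : p ⬝ᵥ (adjugate M *ᵥ p)
      = Pi.single ℓ 1 ⬝ᵥ ((Qᵀ * adjugate M * Q) *ᵥ Pi.single ℓ 1) := by
    have := Fop_aux_dot_conj Qᵀ (adjugate M) (Pi.single ℓ 1)
    rw [transpose_transpose, hpe] at this
    rw [this]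
  rw [h1, hmid, smul_mulVec, dotProduct_smul, Fop_aux_single_dot_matrix,
    Fop_aux_adjugate_diag]
  simp [smul_eq_mul]

lemma Fop_aux_red_posSemidef {n : ℕ} (ℓ : Fin (n+1)) (p : Fin (n+1) → ℝ) (hp : p ℓ ≠ 0)
    (M : Matrix (Fin (n+1)) (Fin (n+1)) ℝ) (hM : M.IsSymm)
    (hpos : ∀ q, q ⬝ᵥ p = 0 → 0 ≤ q ⬝ᵥ (M *ᵥ q)) :
    ((((1 : Matrix (Fin (n+1)) (Fin (n+1)) ℝ).updateCol ℓ p)⁻¹ * M *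
      (((1 : Matrix (Fin (n+1)) (Fin (n+1)) ℝ).updateCol ℓ p)⁻¹)ᵀ).submatrix
      ℓ.succAbove ℓ.succAbove).PosSemidef := by
  set Q := (1 : Matrix (Fin (n+1)) (Fin (n+1)) ℝ).updateCol ℓ p with hQ
  have hdet : Q.det = p ℓ := Fop_aux_detQ ℓ p
  have hu : IsUnit Q.det := by rw [hdet]; exact isUnit_iff_ne_zero.mpr hp
  have hQ'Q : Q⁻¹ * Q = 1 := nonsing_inv_mul _ hu
  set Mt := Q⁻¹ * M * (Q⁻¹)ᵀ with hMt
  have hMtsymm : Mtᵀ = Mt := by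
    rw [hMt, transpose_mul, transpose_mul, transpose_transpose, hM.eq, Matrix.mul_assoc]
  refine posSemidef_iff_dotProduct_mulVec.mpr ⟨?_, ?_⟩
  · show _ᴴ = _
    ext i j
    simp only [conjTranspose_apply, submatrix_apply, star_trivial]
    conv_lhs => rw [← hMtsymm]
    simp
  · intro x
    set y : Fin (n+1) → ℝ := ℓ.insertNth 0 x with hy
    have hyℓ : y ℓ = 0 := by simp [hy]
    have hys : ∀ k, y (ℓ.succAbove k) = x k := fun k => by simp [hy]
    have hin : ∀ i, (∑ j, Mt i j * y j) = ∑ c, Mt i (ℓ.succAbove c) * x c := by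
      intro i
      rw [Fin.sum_univ_succAbove (fun j => Mt i j * y j) ℓ]
      simp [hyℓ, hys]
    have h1 : x ⬝ᵥ ((Mt.submatrix ℓ.succAbove ℓ.succAbove) *ᵥ x) = y ⬝ᵥ (Mt *ᵥ y) := by
      simp only [dotProduct, mulVec, submatrix_apply]
      conv_rhs => rw [Fin.sum_univ_succAbove (fun i => y i * ∑ j, Mt i j * y j) ℓ]
      simp only [hyℓ, zero_mul, zero_add, hys]
      refine Finset.sum_congr rfl fun k _ => ?_
      rw [hin (ℓ.succAbove k)]
    have h2 : y ⬝ᵥ (Mt *ᵥ y) = ((Q⁻¹)ᵀ *ᵥ y) ⬝ᵥ (M *ᵥ ((Q⁻¹)ᵀ *ᵥ y)) := Fop_aux_dot_conj Q⁻¹ M y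
    have h3 : ((Q⁻¹)ᵀ *ᵥ y) ⬝ᵥ p = 0 := by
      have hQp : Q *ᵥ Pi.single ℓ 1 = p := by rw [hQ]; exact Fop_aux_mulVecQ ℓ p
      have hpe : Q⁻¹ *ᵥ p = Pi.single ℓ 1 := by
        rw [← hQp, mulVec_mulVec, hQ'Q, one_mulVec]
      rw [mulVec_transpose, ← dotProduct_mulVec, hpe]
      simp [hyℓ]
    have := hpos _ h3
    rw [star_trivial, h1, h2]
    exact this

lemma Fop_aux_key_nonneg {n : ℕ} (ℓ : Fin (n+1)) (p : Fin (n+1) → ℝ) (hp : p ℓ ≠ 0)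
    (M : Matrix (Fin (n+1)) (Fin (n+1)) ℝ) (hM : M.IsSymm)
    (hpos : ∀ q, q ⬝ᵥ p = 0 → 0 ≤ q ⬝ᵥ (M *ᵥ q)) :
    0 ≤ p ⬝ᵥ (adjugate M *ᵥ p) := by
  rw [Fop_aux_rep ℓ p hp M]
  exact mul_nonneg (sq_nonneg _)
    (Fop_aux_psd_det_nonneg (Fop_aux_red_posSemidef ℓ p hp M hM hpos))

lemma Fop_aux_key {n : ℕ} (ℓ : Fin (n+1)) (p : Fin (n+1) → ℝ) (hp : p ℓ ≠ 0)
    (M N : Matrix (Fin (n+1)) (Fin (n+1)) ℝ) (hM : M.IsSymm) (hN : N.IsSymm)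
    (hNpos : ∀ q, q ⬝ᵥ p = 0 → 0 ≤ q ⬝ᵥ (N *ᵥ q))
    (hMN : (M - N).PosSemidef) :
    p ⬝ᵥ (adjugate N *ᵥ p) ≤ p ⬝ᵥ (adjugate M *ᵥ p) := by
  rw [Fop_aux_rep ℓ p hp M, Fop_aux_rep ℓ p hp N]
  set Q := (1 : Matrix (Fin (n+1)) (Fin (n+1)) ℝ).updateCol ℓ p with hQ
  have hN' := Fop_aux_red_posSemidef ℓ p hp N hN hNpos
  have hconj : ((Q⁻¹) * (M - N) * (Q⁻¹)ᵀ).PosSemidef := by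
    have h := hMN.mul_mul_conjTranspose_same (Q⁻¹)
    have hct : (Q⁻¹)ᴴ = (Q⁻¹)ᵀ := by ext i j; simp [conjTranspose_apply]
    rwa [hct] at h
  have hD := hconj.submatrix ℓ.succAbove
  have hsplit : (Q⁻¹ * M * (Q⁻¹)ᵀ).submatrix ℓ.succAbove ℓ.succAbove
      = (Q⁻¹ * N * (Q⁻¹)ᵀ).submatrix ℓ.succAbove ℓ.succAbove
        + (Q⁻¹ * (M - N) * (Q⁻¹)ᵀ).submatrix ℓ.succAbove ℓ.succAbove := by
    have : Q⁻¹ * M * (Q⁻¹)ᵀ = Q⁻¹ * N * (Q⁻¹)ᵀ + Q⁻¹ * (M - N) * (Q⁻¹)ᵀ := by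
      rw [Matrix.mul_sub, Matrix.sub_mul]
      abel
    rw [this]
    ext i j
    simp [submatrix_apply]
  rw [hsplit]
  exact mul_le_mul_of_nonneg_left (Fop_aux_det_mono_psd hN' hD) (sq_nonneg _)

/-- `F` is degenerate elliptic: for symmetric `A ≤ B`, `F(p,A) ≥ F(p,B)`. -/
theorem Fop_degenerate_elliptic {d : ℕ} (p : Fin d → ℝ)
    (A B : Matrix (Fin d) (Fin d) ℝ) (hA : A.IsSymm) (hB : B.IsSymm)
    (hAB : (B - A).PosSemidef) :
    Fop p B ≤ Fop p A := by
  by_cases hp0 : p = 0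
  · subst hp0
    simp only [Fop]
    split_ifs <;> simp [zero_dotProduct]
  obtain ⟨ℓ, hℓ⟩ : ∃ ℓ, p ℓ ≠ 0 := Function.ne_iff.mp hp0
  cases d with
  | zero => exact ℓ.elim0
  | succ n =>
    have hcof : ∀ C : Matrix (Fin (n+1)) (Fin (n+1)) ℝ, C.IsSymm →
        cof (-C) = adjugate (-C) := by
      intro C hC
      rw [cof, adjugate_transpose, transpose_neg, hC.eq]
    rw [Fop, Fop]
    by_cases hBc : ∀ q : Fin (n+1) → ℝ, q ⬝ᵥ p = 0 → q ⬝ᵥ (B *ᵥ q) ≤ 0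
    · have hAc : ∀ q : Fin (n+1) → ℝ, q ⬝ᵥ p = 0 → q ⬝ᵥ (A *ᵥ q) ≤ 0 := by
        intro q hq
        have h2 := hAB.dotProduct_mulVec_nonneg q
        rw [star_trivial, sub_mulVec, dotProduct_sub] at h2
        linarith [hBc q hq]
      rw [if_pos hBc, if_pos hAc, hcof A hA, hcof B hB]
      have hNpos : ∀ q : Fin (n+1) → ℝ, q ⬝ᵥ p = 0 → 0 ≤ q ⬝ᵥ ((-B) *ᵥ q) := by
        intro q hq
        rw [neg_mulVec, dotProduct_neg]
        linarith [hBc q hq]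
      have hMN : ((-A) - (-B)).PosSemidef := by rw [neg_sub_neg]; exact hAB
      exact Fop_aux_key ℓ p hℓ (-A) (-B) hA.neg hB.neg hNpos hMN
    · rw [if_neg hBc]
      by_cases hAc : ∀ q : Fin (n+1) → ℝ, q ⬝ᵥ p = 0 → q ⬝ᵥ (A *ᵥ q) ≤ 0
      · rw [if_pos hAc, hcof A hA]
        have hMpos : ∀ q : Fin (n+1) → ℝ, q ⬝ᵥ p = 0 → 0 ≤ q ⬝ᵥ ((-A) *ᵥ q) := by
          intro q hq
          rw [neg_mulVec, dotProduct_neg]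
          linarith [hAc q hq]
        exact Fop_aux_key_nonneg ℓ p hℓ (-A) hA.neg hMpos
      · rw [if_neg hAc]
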